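/- Let F(x,λ) = (f̄(x,λ), λ) and F'(x,λ) = (f̄'(x,λ), λ) be one-parameter unfoldings of map-germs f, f' : (ℂ^n,0) → (ℂ^p,0) respectively, and suppose F and F' are φ-equivalent via germs of biholomorphism h(x,λ) = (h̄(x,λ), l(λ)) of (ℂ^n×ℂ,0), k(X,Λ) = (k̄(X,Λ), l(Λ)) of (ℂ^p×ℂ,0), and l of (ℂ,0), with F' ∘ h = k ∘ F as germs. Then for every function germ g : (ℂ^d,0) → (ℂ,0): the maps Ah(x,z) = (h̄(x,g(z)), z) and Ak(X,z) = (k̄(X,g(z)), z) are germs of biholomorphism of (ℂ^n×ℂ^d,0) and (ℂ^p×ℂ^d,0) respectively, and A_{F',l∘g}(f') ∘ Ah = Ak ∘ A_{F,g}(f) as germs; in particular A_{F,g}(f) is A-equivalent to A_{F',l∘g}(f'). -/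

import Mathlib

open Filter Topology

noncomputable section

variable {E F : Type*}

/-- A map-germ at the origin: a holomorphic map defined near `0` sending `0` to `0`. -/
def IsMapGerm [NormedAddCommGroup E] [NormedSpace ℂ E]
    [NormedAddCommGroup F] [NormedSpace ℂ F] (f : E → F) : Prop :=
  AnalyticAt ℂ f 0 ∧ f 0 = 0

/-- A germ of biholomorphism of `(E,0)`: a map-germ whose derivative at `0` is invertible. -/
def IsBiholoGerm [NormedAddCommGroup E] [NormedSpace ℂ E] (h : E → E) : Prop :=
  IsMapGerm h ∧ ∃ e : E ≃L[ℂ] E, fderiv ℂ h 0 = (e : E →L[ℂ] E)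

/-- `A`-equivalence of map-germs. -/
def AEquiv [NormedAddCommGroup E] [NormedSpace ℂ E]
    [NormedAddCommGroup F] [NormedSpace ℂ F] (f f' : E → F) : Prop :=
  ∃ H : E → E, ∃ K : F → F, IsBiholoGerm H ∧ IsBiholoGerm K ∧
    f' ∘ H =ᶠ[𝓝 0] K ∘ f


private lemma exists_clequiv_of_injective {E : Type*} [NormedAddCommGroup E] [NormedSpace ℂ E]
    [FiniteDimensional ℂ E] (T : E →L[ℂ] E) (hT : Function.Injective T) :
    ∃ e : E ≃L[ℂ] E, (e : E →L[ℂ] E) = T := by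
  have hbij : Function.Bijective (T : E →ₗ[ℂ] E) :=
    ⟨hT, (LinearMap.injective_iff_surjective).1 hT⟩
  refine ⟨(LinearEquiv.ofBijective (T : E →ₗ[ℂ] E) hbij).toContinuousLinearEquiv, ?_⟩
  ext x
  rfl

private lemma aug_biholo {A Z : Type*} [NormedAddCommGroup A] [NormedSpace ℂ A]
    [FiniteDimensional ℂ A] [NormedAddCommGroup Z] [NormedSpace ℂ Z] [FiniteDimensional ℂ Z]
    {hbar : A × ℂ → A} {l : ℂ → ℂ}
    (hh : IsBiholoGerm (fun w : A × ℂ => (hbar w, l w.2)))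
    (hl : AnalyticAt ℂ l 0)
    {g : Z → ℂ} (hg : IsMapGerm g) :
    IsBiholoGerm (fun w : A × Z => (hbar (w.1, g w.2), w.2)) := by
  obtain ⟨⟨hHa, hH0⟩, e, he⟩ := hh
  obtain ⟨hga, hg0⟩ := hg
  have hbar0 : hbar 0 = 0 := congrArg Prod.fst hH0
  have hba : AnalyticAt ℂ hbar 0 :=
    ((ContinuousLinearMap.fst ℂ A ℂ).analyticAt _).comp hHa
  have hga' : AnalyticAt ℂ g (Prod.snd (0 : A × Z)) := hga
  have hφa : AnalyticAt ℂ (fun w : A × Z => ((w.1, g w.2) : A × ℂ)) 0 :=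
    analyticAt_fst.prod (hga'.comp analyticAt_snd)
  have hφ0 : (fun w : A × Z => ((w.1, g w.2) : A × ℂ)) 0 = 0 := by
    simp [hg0]
  have hba' : AnalyticAt ℂ hbar ((fun w : A × Z => ((w.1, g w.2) : A × ℂ)) 0) := by
    rw [hφ0]; exact hba
  have hmg : IsMapGerm (fun w : A × Z => (hbar (w.1, g w.2), w.2)) := by
    constructor
    · exact (AnalyticAt.comp (f := fun w : A × Z => ((w.1, g w.2) : A × ℂ)) (x := 0) hba' hφa).prod analyticAt_snd
    · show (hbar ((0 : A × Z).1, g (0 : A × Z).2), (0 : A × Z).2) = 0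
      simp [hg0, hbar0, Prod.ext_iff, Prod.mk_zero_zero]
  -- derivatives
  have hH : HasFDerivAt (fun w : A × ℂ => (hbar w, l w.2)) (e : (A × ℂ) →L[ℂ] (A × ℂ)) 0 :=
    he ▸ hHa.differentiableAt.hasFDerivAt
  have hhb : HasFDerivAt hbar
      ((ContinuousLinearMap.fst ℂ A ℂ).comp (e : (A × ℂ) →L[ℂ] (A × ℂ))) 0 := hH.fst
  have hsnd : HasFDerivAt (fun w : A × ℂ => l w.2)
      ((ContinuousLinearMap.snd ℂ A ℂ).comp (e : (A × ℂ) →L[ℂ] (A × ℂ))) 0 := hH.snd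
  have hld : HasFDerivAt l (fderiv ℂ l 0) (Prod.snd (0 : A × ℂ)) :=
    hl.differentiableAt.hasFDerivAt
  have hl' : HasFDerivAt (fun w : A × ℂ => l w.2)
      ((fderiv ℂ l 0).comp (ContinuousLinearMap.snd ℂ A ℂ)) 0 :=
    hld.comp 0 hasFDerivAt_snd
  have hsnde : (ContinuousLinearMap.snd ℂ A ℂ).comp (e : (A × ℂ) →L[ℂ] (A × ℂ))
      = (fderiv ℂ l 0).comp (ContinuousLinearMap.snd ℂ A ℂ) := hsnd.unique hl'
  have hg' : HasFDerivAt g (fderiv ℂ g 0) (Prod.snd (0 : A × Z)) :=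
    hga.differentiableAt.hasFDerivAt
  have hφ : HasFDerivAt (fun w : A × Z => ((w.1, g w.2) : A × ℂ))
      ((ContinuousLinearMap.fst ℂ A Z).prod
        ((fderiv ℂ g 0).comp (ContinuousLinearMap.snd ℂ A Z))) 0 :=
    hasFDerivAt_fst.prodMk (hg'.comp 0 hasFDerivAt_snd)
  have hhb' : HasFDerivAt hbar
      ((ContinuousLinearMap.fst ℂ A ℂ).comp (e : (A × ℂ) →L[ℂ] (A × ℂ)))
      ((fun w : A × Z => ((w.1, g w.2) : A × ℂ)) 0) := by
    rw [hφ0]; exact hhb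
  set T : (A × Z) →L[ℂ] (A × Z) :=
    (((ContinuousLinearMap.fst ℂ A ℂ).comp (e : (A × ℂ) →L[ℂ] (A × ℂ))).comp
        ((ContinuousLinearMap.fst ℂ A Z).prod
          ((fderiv ℂ g 0).comp (ContinuousLinearMap.snd ℂ A Z)))).prod
      (ContinuousLinearMap.snd ℂ A Z) with hT
  have hAh : HasFDerivAt (fun w : A × Z => (hbar (w.1, g w.2), w.2)) T 0 :=
    (hhb'.comp 0 hφ).prodMk hasFDerivAt_snd
  have hTapp : ∀ w : A × Z, T w = ((e (w.1, fderiv ℂ g 0 w.2)).1, w.2) := by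
    intro w; simp [hT]
  have hsapp : ∀ a : A × ℂ, (e a).2 = fderiv ℂ l 0 a.2 := by
    intro a
    have h := congrFun (congrArg (fun (S : (A × ℂ) →L[ℂ] ℂ) => (S : A × ℂ → ℂ)) hsnde) a
    simpa using h
  have hTinj : Function.Injective T := by
    intro w w' hww'
    rw [hTapp, hTapp, Prod.mk.injEq] at hww'
    obtain ⟨h1, hv⟩ := hww'
    have h2 : (e (w.1, fderiv ℂ g 0 w.2)).2 = (e (w'.1, fderiv ℂ g 0 w'.2)).2 := by
      simp [hsapp, hv]
    have he' : e (w.1, fderiv ℂ g 0 w.2) = e (w'.1, fderiv ℂ g 0 w'.2) := Prod.ext h1 h2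
    have hu := congrArg Prod.fst (e.injective he')
    exact Prod.ext hu hv
  obtain ⟨eT, heT⟩ := exists_clequiv_of_injective T hTinj
  exact ⟨hmg, eT, by rw [hAh.fderiv, heT]⟩

/-- The key step in the proof of Theorem 5.2: if the unfoldings `F(x,λ) = (f̄(x,λ),λ)`
and `F'(x,λ) = (f̄'(x,λ),λ)` are φ-equivalent via `h(x,λ) = (h̄(x,λ), l(λ))`,
`k(X,Λ) = (k̄(X,Λ), l(Λ))` and `l`, then for every function germ `g` the maps
`Ah(x,z) = (h̄(x,g(z)), z)` and `Ak(X,z) = (k̄(X,g(z)), z)` are germs of biholomorphism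
and `A_{F',l∘g}(f') ∘ Ah = Ak ∘ A_{F,g}(f)` as germs; in particular
`A_{F,g}(f)` is `A`-equivalent to `A_{F',l∘g}(f')`. -/
theorem phi_equiv_augmentation_conjugation (n p d : ℕ)
    (f f' : (Fin n → ℂ) → (Fin p → ℂ))
    (fbar fbar' : (Fin n → ℂ) × ℂ → (Fin p → ℂ))
    (hf : IsMapGerm f) (hf' : IsMapGerm f')
    (hF : IsMapGerm (fun w : (Fin n → ℂ) × ℂ => (fbar w, w.2)))
    (hF' : IsMapGerm (fun w : (Fin n → ℂ) × ℂ => (fbar' w, w.2)))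
    (hunf : ∀ᶠ x in 𝓝 (0 : Fin n → ℂ), fbar (x, 0) = f x)
    (hunf' : ∀ᶠ x in 𝓝 (0 : Fin n → ℂ), fbar' (x, 0) = f' x)
    (hbar : (Fin n → ℂ) × ℂ → (Fin n → ℂ))
    (kbar : (Fin p → ℂ) × ℂ → (Fin p → ℂ))
    (l : ℂ → ℂ)
    (hh : IsBiholoGerm (fun w : (Fin n → ℂ) × ℂ => (hbar w, l w.2)))
    (hk : IsBiholoGerm (fun W : (Fin p → ℂ) × ℂ => (kbar W, l W.2)))
    (hl : IsBiholoGerm l)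
    (heq : ((fun w : (Fin n → ℂ) × ℂ => (fbar' w, w.2)) ∘
              (fun w : (Fin n → ℂ) × ℂ => (hbar w, l w.2)))
        =ᶠ[𝓝 0]
          ((fun W : (Fin p → ℂ) × ℂ => (kbar W, l W.2)) ∘
              (fun w : (Fin n → ℂ) × ℂ => (fbar w, w.2))))
    (g : (Fin d → ℂ) → ℂ) (hg : IsMapGerm g) :
    IsBiholoGerm (fun w : (Fin n → ℂ) × (Fin d → ℂ) => (hbar (w.1, g w.2), w.2)) ∧
    IsBiholoGerm (fun W : (Fin p → ℂ) × (Fin d → ℂ) => (kbar (W.1, g W.2), W.2)) ∧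
    ((fun w : (Fin n → ℂ) × (Fin d → ℂ) => (fbar' (w.1, l (g w.2)), w.2)) ∘
        (fun w : (Fin n → ℂ) × (Fin d → ℂ) => (hbar (w.1, g w.2), w.2)))
      =ᶠ[𝓝 0]
    ((fun W : (Fin p → ℂ) × (Fin d → ℂ) => (kbar (W.1, g W.2), W.2)) ∘
        (fun w : (Fin n → ℂ) × (Fin d → ℂ) => (fbar (w.1, g w.2), w.2))) ∧
    AEquiv
      (fun w : (Fin n → ℂ) × (Fin d → ℂ) => (fbar (w.1, g w.2), w.2))
      (fun w : (Fin n → ℂ) × (Fin d → ℂ) => (fbar' (w.1, l (g w.2)), w.2))  := by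
  have part1 : IsBiholoGerm
      (fun w : (Fin n → ℂ) × (Fin d → ℂ) => (hbar (w.1, g w.2), w.2)) :=
    aug_biholo hh hl.1.1 hg
  have part2 : IsBiholoGerm
      (fun W : (Fin p → ℂ) × (Fin d → ℂ) => (kbar (W.1, g W.2), W.2)) :=
    aug_biholo hk hl.1.1 hg
  have hψ : Filter.Tendsto
      (fun w : (Fin n → ℂ) × (Fin d → ℂ) => ((w.1, g w.2) : (Fin n → ℂ) × ℂ))
      (𝓝 0) (𝓝 0) := by
    have hc : ContinuousAt
        (fun w : (Fin n → ℂ) × (Fin d → ℂ) => ((w.1, g w.2) : (Fin n → ℂ) × ℂ)) 0 :=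
      continuousAt_fst.prodMk ((show ContinuousAt g (Prod.snd (0 : (Fin n → ℂ) × (Fin d → ℂ))) from hg.1.continuousAt).comp continuousAt_snd)
    have h0 : (fun w : (Fin n → ℂ) × (Fin d → ℂ) =>
        ((w.1, g w.2) : (Fin n → ℂ) × ℂ)) 0 = 0 := by simp [hg.2]
    rw [← h0]; exact hc
  have part3 :
      ((fun w : (Fin n → ℂ) × (Fin d → ℂ) => (fbar' (w.1, l (g w.2)), w.2)) ∘
          (fun w : (Fin n → ℂ) × (Fin d → ℂ) => (hbar (w.1, g w.2), w.2)))
        =ᶠ[𝓝 0]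
      ((fun W : (Fin p → ℂ) × (Fin d → ℂ) => (kbar (W.1, g W.2), W.2)) ∘
          (fun w : (Fin n → ℂ) × (Fin d → ℂ) => (fbar (w.1, g w.2), w.2))) := by
    filter_upwards [hψ.eventually heq] with w hw
    have h1 := congrArg Prod.fst hw
    simp only [Function.comp_apply] at h1 ⊢
    exact Prod.ext h1 rfl
  exact ⟨part1, part2, part3, _, _, part1, part2, part3⟩
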